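/- The generating polynomial for desarrangements of order n by number of inversions, K_n(q) = sum over σ in K_n of q^{inv σ}, equals sum over k with 2 ≤ 2k ≤ n-1 of ((1 - q^{2k})/(1 - q)) * ((q^{2k+2}; q)_{n-2k-1} / (1 - q)^{n-2k-1}) * q^{binom(2k,2)} + q^{binom(n,2)} χ(n even); moreover, each summand indexed by k is the inversion-generating polynomial for the desarrangements of order n whose leftmost trough is at position 2k. -/

import Mathlib

open Finset

attribute [local instance] Classical.propDecidable

noncomputable section

/-- The word `x_1 x_2 ... x_n` (0-indexed) of a signed permutation of order `n`,
encoded as a pair (permutation, signs): `x_i = ±(σ(i)+1)`. -/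
def sword (n : ℕ) (w : Equiv.Perm (Fin n) × (Fin n → Bool)) : ℕ → ℤ :=
  fun i => if h : i < n then
      (if w.2 ⟨i, h⟩ then -(((w.1 ⟨i, h⟩ : ℕ) : ℤ) + 1) else (((w.1 ⟨i, h⟩ : ℕ) : ℤ) + 1))
    else 0

/-- number of negative letters -/
def negStat (n : ℕ) (x : ℕ → ℤ) : ℕ := ((Finset.range n).filter (fun i => x i < 0)).card

/-- number of positive fixed points (`x_i = i`, 1-indexed) -/
def fixPlus (n : ℕ) (x : ℕ → ℤ) : ℕ :=
  ((Finset.range n).filter (fun i => x i = (i : ℤ) + 1)).card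

/-- number of negative fixed points (`x_i = -i`, 1-indexed) -/
def fixMinus (n : ℕ) (x : ℕ → ℤ) : ℕ :=
  ((Finset.range n).filter (fun i => x i = -((i : ℤ) + 1))).card

/-- major index of the word -/
def majStat (n : ℕ) (x : ℕ → ℤ) : ℕ :=
  ∑ i ∈ Finset.range (n - 1), if x (i + 1) < x i then i + 1 else 0

/-- number of inversions of the word -/
def invStat (n : ℕ) (x : ℕ → ℤ) : ℕ :=
  ((Finset.range n ×ˢ Finset.range n).filter (fun p => p.1 < p.2 ∧ x p.2 < x p.1)).card

/-- length function `ℓ(w) = inv w + ∑_{x_i<0} |x_i|` -/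
def lenStat (n : ℕ) (x : ℕ → ℤ) : ℕ :=
  invStat n x + ∑ i ∈ Finset.range n, if x i < 0 then (x i).natAbs else 0

/-- flag-major index `fmaj = 2 maj + neg` -/
def fmajStat (n : ℕ) (x : ℕ → ℤ) : ℕ := 2 * majStat n x + negStat n x

/-- the word `x_0 ... x_{m-1}` has its leftmost trough at position `2k` (1-indexed):
`x_1 > x_2 > ... > x_{2k}` and `x_{2k} < x_{2k+1}` (with `x_{m+1} = ∞`). -/
def IsDesarAt (m k : ℕ) (x : ℕ → ℤ) : Prop :=
  1 ≤ k ∧ 2 * k ≤ m ∧ (∀ i, i + 1 < 2 * k → x (i + 1) < x i) ∧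
    (2 * k = m ∨ x (2 * k - 1) < x (2 * k))

/-- a word of length `m` is a desarrangement (empty word included) -/
def IsDesar (m : ℕ) (x : ℕ → ℤ) : Prop :=
  m = 0 ∨ ∃ k, IsDesarAt m k x

/-- the length of the longest right factor of the word of length `n`
which is a desarrangement -/
def dlen (n : ℕ) (x : ℕ → ℤ) : ℕ :=
  sSup {m | m ≤ n ∧ IsDesar m (fun i => x (n - m + i))}

/-- number of letters of `w^-` in the pixed factorization `w = w^- w^+ w^d` -/
def pixMinus (n : ℕ) (x : ℕ → ℤ) : ℕ :=
  ((Finset.range (n - dlen n x)).filter (fun i => x i < 0)).card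

/-- number of letters of `w^+` in the pixed factorization `w = w^- w^+ w^d` -/
def pixPlus (n : ℕ) (x : ℕ → ℤ) : ℕ :=
  ((Finset.range (n - dlen n x)).filter (fun i => 0 < x i)).card

/-- the number of derangements of an `m`-element set -/
def dnum (m : ℕ) : ℕ :=
  (Finset.univ.filter (fun σ : Equiv.Perm (Fin m) => ∀ i, σ i ≠ i)).card

/-- the word of an ordinary permutation of `{1, ..., m}` -/
def pword (m : ℕ) (σ : Equiv.Perm (Fin m)) : ℕ → ℤ :=
  fun i => if h : i < m then ((σ ⟨i, h⟩ : ℕ) : ℤ) + 1 else 0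

/-- the q-ascending factorial `(q;q)_m` -/
def qq {K : Type*} [CommRing K] (q : K) (m : ℕ) : K :=
  ∏ i ∈ Finset.range m, (1 - q ^ (i + 1))

/-- `D_m(q)`: generating polynomial for derangements of order `m` by major index -/
def Dmaj {K : Type*} [CommRing K] (q : K) (m : ℕ) : K :=
  ∑ σ ∈ Finset.univ.filter (fun σ : Equiv.Perm (Fin m) => ∀ i, σ i ≠ i),
    q ^ majStat m (pword m σ)

section AuxSt19

variable {n : ℕ}

/-- first `m` values of `σ` are strictly decreasing -/
def decOn (n m : ℕ) (σ : Equiv.Perm (Fin n)) : Prop :=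
  ∀ u v : Fin n, u < v → (v : ℕ) < m → σ v < σ u

/-- number of inversions of a permutation -/
def invp (n : ℕ) (σ : Equiv.Perm (Fin n)) : ℕ :=
  ((Finset.univ : Finset (Fin n × Fin n)).filter (fun p => p.1 < p.2 ∧ σ p.2 < σ p.1)).card

lemma pword_val (σ : Equiv.Perm (Fin n)) (a : Fin n) :
    pword n σ (a : ℕ) = ((σ a : ℕ) : ℤ) + 1 := by
  simp [pword, a.isLt]

lemma pword_lt_pword_iff (σ : Equiv.Perm (Fin n)) {a b : ℕ} (ha : a < n) (hb : b < n) :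
    pword n σ b < pword n σ a ↔ σ ⟨b, hb⟩ < σ ⟨a, ha⟩ := by
  have := pword_val σ ⟨a, ha⟩
  have := pword_val σ ⟨b, hb⟩
  simp only [pword, dif_pos ha, dif_pos hb, Fin.lt_def]
  omega

lemma invStat_pword (σ : Equiv.Perm (Fin n)) : invStat n (pword n σ) = invp n σ := by
  classical
  unfold invStat invp
  refine (Finset.card_bij (fun (p : Fin n × Fin n) _ => ((p.1 : ℕ), (p.2 : ℕ))) ?_ ?_ ?_).symm
  · rintro ⟨a, b⟩ hp
    simp only [Finset.mem_filter, Finset.mem_univ, true_and] at hp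
    simp only [Finset.mem_filter, Finset.mem_product, Finset.mem_range]
    refine ⟨⟨a.isLt, b.isLt⟩, ?_, ?_⟩
    · exact hp.1
    · rw [pword_lt_pword_iff σ a.isLt b.isLt]
      simpa using hp.2
  · rintro ⟨a, b⟩ _ ⟨a', b'⟩ _ h
    simp only [Prod.mk.injEq] at h
    exact Prod.ext (Fin.ext h.1) (Fin.ext h.2)
  · rintro ⟨a, b⟩ hp
    simp only [Finset.mem_filter, Finset.mem_product, Finset.mem_range] at hp
    obtain ⟨⟨ha, hb⟩, h1, h2⟩ := hp
    refine ⟨(⟨a, ha⟩, ⟨b, hb⟩), ?_, rfl⟩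
    simp only [Finset.mem_filter, Finset.mem_univ, true_and]
    exact ⟨h1, (pword_lt_pword_iff σ ha hb).mp h2⟩

end AuxSt19
section AuxSt19b

variable {n : ℕ}

lemma invp_swap (σ : Equiv.Perm (Fin n)) {i : ℕ} (h : i + 1 < n)
    (hd : σ ⟨i+1, h⟩ < σ ⟨i, Nat.lt_of_succ_lt h⟩) :
    invp n (σ * Equiv.swap ⟨i, Nat.lt_of_succ_lt h⟩ ⟨i+1, h⟩) + 1 = invp n σ := by
  classical
  set a : Fin n := ⟨i, Nat.lt_of_succ_lt h⟩ with ha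
  set b : Fin n := ⟨i+1, h⟩ with hb
  set s := Equiv.swap a b with hs
  set τ := σ * s with hτ
  have hab : a < b := by simp [ha, hb, Fin.lt_def]
  have sval : ∀ x : Fin n, ((s x : Fin n) : ℕ)
      = if (x:ℕ) = i then i+1 else if (x:ℕ) = i+1 then i else x := by
    intro x
    rw [hs, Equiv.swap_apply_def]
    split_ifs with h1 h2 h3 h4 h5 <;> simp_all [Fin.ext_iff, ha, hb]
  have key : ∀ u v : Fin n, u < v → ¬(u = a ∧ v = b) → s u < s v := by
    intro u v huv hne
    have h1 := sval u
    have h2 := sval v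
    have hne' : ¬((u:ℕ) = i ∧ (v:ℕ) = i+1) := by
      simpa [Fin.ext_iff, ha, hb] using hne
    rw [Fin.lt_def] at huv ⊢
    have hv := v.isLt
    split_ifs at h1 h2 <;> omega
  have hss : ∀ x : Fin n, s (s x) = x := fun x => Equiv.swap_apply_self _ _ x
  have hsa : s a = b := Equiv.swap_apply_left _ _
  have hsb : s b = a := Equiv.swap_apply_right _ _
  set I : Equiv.Perm (Fin n) → Finset (Fin n × Fin n) :=
    fun ρ => (Finset.univ : Finset (Fin n × Fin n)).filter
      (fun p => p.1 < p.2 ∧ ρ p.2 < ρ p.1) with hI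
  have hmem : (a, b) ∈ I σ := by
    simp only [hI, Finset.mem_filter, Finset.mem_univ, true_and]
    exact ⟨hab, hd⟩
  have hcard : (I τ).card = ((I σ).erase (a, b)).card := by
    refine Finset.card_bij' (fun p _ => (s p.1, s p.2)) (fun p _ => (s p.1, s p.2))
      ?_ ?_ ?_ ?_
    · rintro ⟨u, v⟩ hp
      simp only [hI, Finset.mem_filter, Finset.mem_univ, true_and] at hp
      obtain ⟨huv, hinv⟩ := hp
      have hpne : ¬(u = a ∧ v = b) := by
        rintro ⟨rfl, rfl⟩
        rw [hτ] at hinv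
        simp only [Equiv.Perm.mul_apply, hsa, hsb] at hinv
        exact absurd hd (lt_asymm hinv)
      have hlt : s u < s v := key u v huv hpne
      rw [Finset.mem_erase]
      constructor
      · rintro hpair
        have h1 : s u = a := congrArg Prod.fst hpair
        have h2 : s v = b := congrArg Prod.snd hpair
        have hub : u = b := by rw [← hsa, ← h1, hss]
        have hva : v = a := by rw [← hsb, ← h2, hss]
        rw [hub, hva, Fin.lt_def] at huv
        have e1 : (b:ℕ) = i + 1 := rfl
        have e2 : (a:ℕ) = i := rfl
        omega
      · simp only [hI, Finset.mem_filter, Finset.mem_univ, true_and]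
        refine ⟨hlt, ?_⟩
        rw [hτ] at hinv
        simpa only [Equiv.Perm.mul_apply] using hinv
    · rintro ⟨u, v⟩ hp
      rw [Finset.mem_erase] at hp
      obtain ⟨hpne, hp⟩ := hp
      simp only [hI, Finset.mem_filter, Finset.mem_univ, true_and] at hp
      obtain ⟨huv, hinv⟩ := hp
      have hpne' : ¬(u = a ∧ v = b) := by
        rintro ⟨rfl, rfl⟩; exact hpne rfl
      have hlt : s u < s v := key u v huv hpne'
      simp only [hI, Finset.mem_filter, Finset.mem_univ, true_and]
      refine ⟨hlt, ?_⟩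
      rw [hτ]
      simpa only [Equiv.Perm.mul_apply, hss] using hinv
    · rintro ⟨u, v⟩ _; simp [hss]
    · rintro ⟨u, v⟩ _; simp [hss]
  have : (I σ).card = ((I σ).erase (a,b)).card + 1 := by
    rw [Finset.card_erase_add_one hmem]
  show (I τ).card + 1 = (I σ).card
  rw [hcard]
  exact this.symm
section AuxSt19c

variable {n : ℕ}

def swp (n i : ℕ) : Equiv.Perm (Fin n) :=
  if h : i + 1 < n then Equiv.swap ⟨i, Nat.lt_of_succ_lt h⟩ ⟨i+1, h⟩ else 1

def cyc (n : ℕ) : ℕ → ℕ → Equiv.Perm (Fin n)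
  | _, 0 => 1
  | j, (t+1) => swp n j * cyc n (j+1) t

lemma swp_val {i : ℕ} (h : i + 1 < n) (y : Fin n) :
    ((swp n i) y : ℕ) = if (y:ℕ) = i then i+1 else if (y:ℕ) = i+1 then i else y := by
  unfold swp
  rw [dif_pos h, Equiv.swap_apply_def]
  split_ifs <;> simp_all [Fin.ext_iff]

lemma cyc_val (t : ℕ) : ∀ (j : ℕ) (x : Fin n), j + t < n →
    ((cyc n j t) x : ℕ) = if (x:ℕ) < j ∨ j + t < (x:ℕ) then (x:ℕ)
      else if (x:ℕ) = j + t then j else (x:ℕ)+1 := by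
  induction t with
  | zero =>
    intro j x h
    simp only [cyc, Equiv.Perm.one_apply]
    split_ifs <;> omega
  | succ t ih =>
    intro j x h
    have hj1 : j + 1 < n := by omega
    have hinner := ih (j+1) x (by omega)
    show ((swp n j) ((cyc n (j+1) t) x) : ℕ) = _
    rw [swp_val hj1]
    split_ifs at hinner ⊢ <;> omega

lemma invp_cyc (t : ℕ) : ∀ (σ : Equiv.Perm (Fin n)) (j : ℕ) (h : j + t < n),
    (∀ x : Fin n, j < (x:ℕ) → (x:ℕ) ≤ j + t → σ x < σ ⟨j, by omega⟩) →
    invp n (σ * cyc n j t) + t = invp n σ := by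
  induction t with
  | zero => intro σ j h hyp; simp [cyc]
  | succ t ih =>
    intro σ j h hyp
    have hj1 : j + 1 < n := by omega
    have hjn : j < n := by omega
    have hswp : swp n j = Equiv.swap ⟨j, hjn⟩ ⟨j+1, hj1⟩ := by
      unfold swp; rw [dif_pos hj1]
    have hd : σ ⟨j+1, hj1⟩ < σ ⟨j, Nat.lt_of_succ_lt hj1⟩ :=
      hyp ⟨j+1, hj1⟩ (by simp only [Fin.val_mk]; omega) (by simp only [Fin.val_mk]; omega)
    have step : invp n (σ * swp n j) + 1 = invp n σ := by
      rw [hswp]; exact invp_swap σ hj1 hd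
    have assoc : σ * cyc n j (t+1) = (σ * swp n j) * cyc n (j+1) t := by
      show σ * (swp n j * cyc n (j+1) t) = _
      rw [mul_assoc]
    have e1 : (σ * swp n j) ⟨j+1, hj1⟩ = σ ⟨j, hjn⟩ := by
      have : (swp n j) ⟨j+1, hj1⟩ = ⟨j, hjn⟩ := by
        apply Fin.ext; rw [swp_val hj1]; simp
      simp [Equiv.Perm.mul_apply, this]
    have hyp' : ∀ x : Fin n, j+1 < (x:ℕ) → (x:ℕ) ≤ j+1+t →
        (σ * swp n j) x < (σ * swp n j) ⟨j+1, by omega⟩ := by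
      intro x hx1 hx2
      have e2 : (σ * swp n j) x = σ x := by
        have : (swp n j) x = x := by
          apply Fin.ext; rw [swp_val hj1]; split_ifs <;> omega
        simp [Equiv.Perm.mul_apply, this]
      rw [e2]
      have : (σ * swp n j) ⟨j+1, by omega⟩ = σ ⟨j, hjn⟩ := e1
      rw [this]
      exact hyp x (by omega) (by omega)
    have hih := ih (σ * swp n j) (j+1) (by omega) hyp'
    rw [assoc]
    omega

end AuxSt19c
section AuxSt19d

variable {n : ℕ}

def Fm (n m : ℕ) : Finset (Equiv.Perm (Fin n)) := Finset.univ.filter (decOn n m)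

lemma card_val_lt (j : ℕ) (hj : j ≤ n) :
    ((Finset.univ : Finset (Fin n)).filter (fun i : Fin n => (i:ℕ) < j)).card = j := by
  classical
  have h : ∀ m ∈ Finset.range j, m < n := fun m hm =>
    lt_of_lt_of_le (Finset.mem_range.mp hm) hj
  have : ((Finset.univ : Finset (Fin n)).filter (fun i : Fin n => (i:ℕ) < j))
      = (Finset.range j).attachFin h := by
    ext x
    simp [Finset.mem_attachFin]
  rw [this, Finset.card_attachFin, Finset.card_range]

lemma decOn_of_consec {m : ℕ} (hmn : m ≤ n) (σ : Equiv.Perm (Fin n))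
    (hc : ∀ i : ℕ, ∀ hi : i + 1 < m,
      σ ⟨i+1, lt_of_lt_of_le hi hmn⟩ < σ ⟨i, by omega⟩) :
    decOn n m σ := by
  have main : ∀ v : ℕ, ∀ hv : v < m, ∀ u : Fin n, (u:ℕ) < v →
      σ ⟨v, lt_of_lt_of_le hv hmn⟩ < σ u := by
    intro v
    induction v with
    | zero => intro _ u hu; omega
    | succ v ihv =>
      intro hv u hu
      have hstep := hc v hv
      rcases Nat.lt_or_ge (u:ℕ) v with h | h
      · exact lt_trans hstep (ihv (by omega) u h)
      · have huv : u = ⟨v, by omega⟩ := Fin.ext (show (u:ℕ) = v by omega)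
        rw [huv]
        exact hstep
  intro u v huv hvm
  have hv2 : σ v = σ ⟨(v:ℕ), lt_of_lt_of_le hvm hmn⟩ := by congr 1
  rw [hv2]
  exact main (v:ℕ) hvm u huv

lemma decOn_succ {m : ℕ} (hm : m < n) (hm1 : 1 ≤ m) (σ : Equiv.Perm (Fin n)) :
    decOn n (m+1) σ ↔ decOn n m σ ∧ σ ⟨m, hm⟩ < σ ⟨m-1, by omega⟩ := by
  constructor
  · intro d
    refine ⟨fun u v huv hv => d u v huv (by omega), ?_⟩
    refine d ⟨m-1, by omega⟩ ⟨m, hm⟩ (show m - 1 < m by omega) (show m < m + 1 by omega)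
  · rintro ⟨d, hlast⟩ u v huv hv
    rcases Nat.lt_or_ge (v:ℕ) m with h | h
    · exact d u v huv h
    · have hvm : v = ⟨m, hm⟩ := Fin.ext (show (v:ℕ) = m by omega)
      subst hvm
      have humval : (u:ℕ) < m := huv
      rcases Nat.lt_or_ge (u:ℕ) (m-1) with h2 | h2
      · exact lt_trans hlast (d u ⟨m-1, by omega⟩ (show (u:ℕ) < m - 1 from h2) (show m - 1 < m by omega))
      · have hu : u = ⟨m-1, by omega⟩ := Fin.ext (show (u:ℕ) = m - 1 by omega)
        rw [hu]
        exact hlast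

lemma decOn_n_iff (σ : Equiv.Perm (Fin n)) : decOn n n σ ↔ σ = Fin.revPerm := by
  constructor
  · intro hd
    have hsm : StrictMono (fun x : Fin n => σ x.rev) := by
      intro x y hxy
      exact hd y.rev x.rev (Fin.rev_lt_rev.mpr hxy) (x.rev.isLt)
    have hsurj : Function.Surjective (fun x : Fin n => σ x.rev) :=
      σ.surjective.comp Fin.rev_surjective
    have hid : (fun x : Fin n => σ x.rev) = id := by
      refine (@StrictMono.range_inj (Fin n) (Fin n) _ _ (inferInstance : WellFoundedLT (Fin n)) _ _ hsm strictMono_id).mp ?_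
      rw [Set.range_eq_univ.mpr hsurj, Set.range_id]
    apply Equiv.ext
    intro y
    have h2 := congrFun hid y.rev
    simp only [id_eq] at h2
    rw [Fin.rev_rev] at h2
    rw [h2, Fin.revPerm_apply]
  · rintro rfl u v huv _
    simp only [Fin.revPerm_apply]
    exact Fin.rev_lt_rev.mpr huv

lemma Fm_n_eq : Fm n n = {Fin.revPerm} := by
  ext σ
  simp [Fm, decOn_n_iff]

lemma invp_rev : invp n Fin.revPerm = n.choose 2 := by
  classical
  unfold invp
  have hfil : (Finset.univ : Finset (Fin n × Fin n)).filter
      (fun p => p.1 < p.2 ∧ Fin.revPerm p.2 < Fin.revPerm p.1)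
      = (Finset.univ : Finset (Fin n × Fin n)).filter (fun p => (p.1:ℕ) < (p.2:ℕ)) := by
    apply Finset.filter_congr
    intro p _
    constructor
    · exact fun h => h.1
    · intro h
      exact ⟨h, by simp only [Fin.revPerm_apply]; exact Fin.rev_lt_rev.mpr h⟩
  rw [hfil, Finset.card_filter, Fintype.sum_prod_type, Finset.sum_comm]
  have hrow : ∀ b : Fin n, (∑ a : Fin n, if (a:ℕ) < (b:ℕ) then (1:ℕ) else 0) = (b:ℕ) := by
    intro b
    rw [← Finset.card_filter]
    exact card_val_lt _ (le_of_lt b.isLt)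
  rw [Finset.sum_congr rfl (fun b _ => hrow b)]
  rw [Fin.sum_univ_eq_sum_range (fun i => i) n]
  have h2 := Finset.sum_range_id_mul_two n
  have h3 : n.choose 2 = n * (n-1) / 2 := Nat.choose_two_right n
  omega

end AuxSt19d
section AuxSt19e

variable {n : ℕ}

lemma cval {m j : ℕ} (hj : j ≤ m) (hm : m < n) (x : Fin n) :
    ((cyc n j (m-j)) x : ℕ) = if (x:ℕ) < j ∨ m < (x:ℕ) then (x:ℕ)
      else if (x:ℕ) = m then j else (x:ℕ)+1 := by
  have h := cyc_val (n:=n) (m-j) j x (by omega)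
  have e : j + (m-j) = m := by omega
  rw [e] at h
  exact h

lemma phi_mem {m j : ℕ} (hj : j ≤ m) (hm : m < n) (σ' : Equiv.Perm (Fin n))
    (hσ' : decOn n (m+1) σ') :
    decOn n m (σ' * cyc n j (m-j)) ∧
    ((Finset.univ : Finset (Fin n)).filter
      (fun i : Fin n => (i:ℕ) < m ∧
        (σ' * cyc n j (m-j)) ⟨m, hm⟩ < (σ' * cyc n j (m-j)) i)).card = j := by
  set c := cyc n j (m-j) with hc
  have happ : ∀ x : Fin n, (σ' * c) x = σ' (c x) := fun x => rfl
  have hcm : c ⟨m, hm⟩ = ⟨j, by omega⟩ := by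
    apply Fin.ext
    rw [cval hj hm]
    simp only [Fin.val_mk]
    rw [if_neg (by omega)]
    simp only [if_true]
  have hmid : ∀ x : Fin n, (x:ℕ) < m → ((c x : ℕ) = if (x:ℕ) < j then (x:ℕ) else (x:ℕ)+1) := by
    intro x hx
    rw [cval hj hm]
    split_ifs with h1 h2 h3 <;> omega
  constructor
  · intro u v huv hv
    rw [happ, happ]
    have hu := hmid u (lt_trans huv hv)
    have hv2 := hmid v hv
    have hlt : c u < c v := by
      rw [Fin.lt_def]
      rw [Fin.lt_def] at huv
      split_ifs at hu hv2 <;> omega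
    have hvm1 : ((c v : ℕ)) < m + 1 := by
      split_ifs at hv2 <;> omega
    exact hσ' (c u) (c v) hlt hvm1
  · have hfe : (Finset.univ : Finset (Fin n)).filter
        (fun i : Fin n => (i:ℕ) < m ∧ (σ' * c) ⟨m, hm⟩ < (σ' * c) i)
        = (Finset.univ : Finset (Fin n)).filter (fun i : Fin n => (i:ℕ) < j) := by
      apply Finset.filter_congr
      intro i _
      rw [happ, happ, hcm]
      constructor
      · rintro ⟨him, hlt⟩
        have hci := hmid i him
        by_contra hij
        push_neg at hij
        have hgt : j < ((c i : ℕ)) := by split_ifs at hci <;> omega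
        have := hσ' ⟨j, by omega⟩ (c i) (by rw [Fin.lt_def]; exact hgt)
          (by split_ifs at hci <;> omega)
        exact absurd hlt (lt_asymm this)
      · intro hij
        have him : (i:ℕ) < m := by omega
        refine ⟨him, ?_⟩
        have hci : c i = i := by
          apply Fin.ext
          rw [hmid i him, if_pos hij]
        rw [hci]
        exact hσ' i ⟨j, by omega⟩ (by rw [Fin.lt_def]; exact hij) (by simp only [Fin.val_mk]; omega)
    rw [hfe]
    exact card_val_lt j (by omega)

lemma Sdc_iff {m j : ℕ} (hj : j ≤ m) (hm : m < n) (σ : Equiv.Perm (Fin n))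
    (hσ : decOn n m σ)
    (hS : ((Finset.univ : Finset (Fin n)).filter
      (fun i : Fin n => (i:ℕ) < m ∧ σ ⟨m, hm⟩ < σ i)).card = j) :
    ∀ i : Fin n, ((i:ℕ) < m ∧ σ ⟨m, hm⟩ < σ i) ↔ (i:ℕ) < j := by
  set S := (Finset.univ : Finset (Fin n)).filter
      (fun i : Fin n => (i:ℕ) < m ∧ σ ⟨m, hm⟩ < σ i) with hSdef
  have hmemS : ∀ i : Fin n, i ∈ S ↔ ((i:ℕ) < m ∧ σ ⟨m, hm⟩ < σ i) := by
    intro i; simp [hSdef]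
  have hdown : ∀ i i' : Fin n, (i':ℕ) ≤ (i:ℕ) → i ∈ S → i' ∈ S := by
    intro i i' hle hi
    rw [hmemS] at hi ⊢
    rcases eq_or_lt_of_le hle with heq | hlt
    · have : i' = i := Fin.ext heq
      rw [this]; exact hi
    · refine ⟨by omega, lt_trans hi.2 (hσ i' i (by rw [Fin.lt_def]; exact hlt) hi.1)⟩
  intro i
  constructor
  · intro hi
    have hiS : i ∈ S := (hmemS i).mpr hi
    have hsub : (Finset.univ : Finset (Fin n)).filter
        (fun a : Fin n => (a:ℕ) < (i:ℕ) + 1) ⊆ S := by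
      intro a ha
      simp only [Finset.mem_filter, Finset.mem_univ, true_and] at ha
      exact hdown i a (by omega) hiS
    have hcard := Finset.card_le_card hsub
    rw [card_val_lt ((i:ℕ)+1) i.isLt, hS] at hcard
    omega
  · intro hij
    by_contra hni
    have hsub : S ⊆ (Finset.univ : Finset (Fin n)).filter
        (fun a : Fin n => (a:ℕ) < (i:ℕ)) := by
      intro a ha
      simp only [Finset.mem_filter, Finset.mem_univ, true_and]
      by_contra hc
      push_neg at hc
      exact hni ((hmemS i).mp (hdown a i hc ha))
    have hcard := Finset.card_le_card hsub
    rw [card_val_lt ((i:ℕ)) (le_of_lt i.isLt), hS] at hcard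
    omega

lemma psi_mem {m j : ℕ} (hj : j ≤ m) (hm : m < n) (σ : Equiv.Perm (Fin n))
    (hσ : decOn n m σ)
    (hS : ((Finset.univ : Finset (Fin n)).filter
      (fun i : Fin n => (i:ℕ) < m ∧ σ ⟨m, hm⟩ < σ i)).card = j) :
    decOn n (m+1) (σ * (cyc n j (m-j))⁻¹) := by
  set c := cyc n j (m-j) with hc
  have hSiff := Sdc_iff hj hm σ hσ hS
  have happ : ∀ x : Fin n, (σ * c⁻¹) x = σ (c⁻¹ x) := fun x => rfl
  have hcinv : ∀ (x : Fin n) (y : Fin n), c y = x → c⁻¹ x = y := by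
    intro x y h
    rw [← h]
    exact Equiv.symm_apply_apply c y
  have cinv_lt : ∀ x : Fin n, (x:ℕ) < j → c⁻¹ x = x := by
    intro x hx
    apply hcinv
    apply Fin.ext
    rw [cval hj hm, if_pos (Or.inl hx)]
  have cinv_gt : ∀ x : Fin n, m < (x:ℕ) → c⁻¹ x = x := by
    intro x hx
    apply hcinv
    apply Fin.ext
    rw [cval hj hm, if_pos (Or.inr hx)]
  have cinv_eqj : ∀ x : Fin n, (x:ℕ) = j → c⁻¹ x = ⟨m, hm⟩ := by
    intro x hx
    apply hcinv
    apply Fin.ext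
    rw [cval hj hm]
    simp only [Fin.val_mk]
    rw [if_neg (by omega)]
    simp only [if_true]
    omega
  have cinv_mid : ∀ x : Fin n, j < (x:ℕ) → (x:ℕ) ≤ m → c⁻¹ x = ⟨(x:ℕ)-1, by omega⟩ := by
    intro x hx1 hx2
    apply hcinv
    apply Fin.ext
    rw [cval hj hm]
    simp only [Fin.val_mk]
    rw [if_neg (by omega), if_neg (by omega)]
    omega
  intro u v huv hv
  rw [happ, happ]
  rw [Fin.lt_def] at huv
  have hvm : (v:ℕ) ≤ m := by omega
  rcases Nat.lt_trichotomy (v:ℕ) j with hvj | hvj | hvj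
  · -- v < j : both fixed
    rw [cinv_lt u (by omega), cinv_lt v hvj]
    exact hσ u v (by rw [Fin.lt_def]; exact huv) (by omega)
  · -- v = j : u < j, σ' v = σ ⟨m⟩, need σ ⟨m⟩ < σ u
    rw [cinv_lt u (by omega), cinv_eqj v hvj]
    exact ((hSiff u).mpr (by omega)).2
  · -- v > j
    rw [cinv_mid v hvj hvm]
    rcases Nat.lt_trichotomy (u:ℕ) j with huj | huj | huj
    · rw [cinv_lt u huj]
      exact hσ u ⟨(v:ℕ)-1, by omega⟩ (by rw [Fin.lt_def]; simp only [Fin.val_mk]; omega)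
        (by simp only [Fin.val_mk]; omega)
    · rw [cinv_eqj u huj]
      have hvm1 : (v:ℕ)-1 < m := by omega
      have hle : ¬(σ ⟨m, hm⟩ < σ ⟨(v:ℕ)-1, by omega⟩) := by
        intro hh
        have := (hSiff ⟨(v:ℕ)-1, by omega⟩).mp ⟨hvm1, hh⟩
        simp only [Fin.val_mk] at this
        omega
      have hle2 : σ ⟨(v:ℕ)-1, by omega⟩ ≤ σ ⟨m, hm⟩ := le_of_not_gt hle
      have hne : σ ⟨(v:ℕ)-1, by omega⟩ ≠ σ ⟨m, hm⟩ := by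
        intro hh
        have h2 := congrArg Fin.val (σ.injective hh)
        simp only [Fin.val_mk] at h2
        omega
      exact lt_of_le_of_ne hle2 hne
    · rw [cinv_mid u (by omega) (by omega)]
      exact hσ ⟨(u:ℕ)-1, by omega⟩ ⟨(v:ℕ)-1, by omega⟩
        (by rw [Fin.lt_def]; simp only [Fin.val_mk]; omega)
        (by simp only [Fin.val_mk]; omega)

end AuxSt19e
section AuxSt19f

variable {K : Type*} [Field K] {n : ℕ}

def Ssum (q : K) (n m : ℕ) : K := ∑ σ ∈ Fm n m, q ^ invp n σ

lemma Ssum_step (q : K) {m : ℕ} (hm : m < n) :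
    q^m * Ssum q n m = (∑ t ∈ Finset.range (m+1), q^t) * Ssum q n (m+1) := by
  classical
  have hLHS : q^m * Ssum q n m = ∑ σ ∈ Fm n m, q ^ (m + invp n σ) := by
    rw [Ssum, Finset.mul_sum]
    exact Finset.sum_congr rfl (fun σ _ => by rw [pow_add])
  rw [hLHS]
  have hmaps : ∀ σ ∈ Fm n m, (((Finset.univ : Finset (Fin n)).filter
      (fun i : Fin n => (i:ℕ) < m ∧ σ ⟨m, hm⟩ < σ i)).card) ∈ Finset.range (m+1) := by
    intro σ _
    rw [Finset.mem_range]
    have hsub : ((Finset.univ : Finset (Fin n)).filter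
        (fun i : Fin n => (i:ℕ) < m ∧ σ ⟨m, hm⟩ < σ i))
        ⊆ ((Finset.univ : Finset (Fin n)).filter (fun i : Fin n => (i:ℕ) < m)) := by
      intro a ha
      simp only [Finset.mem_filter, Finset.mem_univ, true_and] at ha ⊢
      exact ha.1
    have hcle := Finset.card_le_card hsub
    rw [card_val_lt m (le_of_lt hm)] at hcle
    omega
  rw [← Finset.sum_fiberwise_of_maps_to hmaps (fun σ => q ^ (m + invp n σ))]
  rw [Finset.sum_mul]
  apply Finset.sum_congr rfl
  intro j hj
  rw [Finset.mem_range] at hj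
  have hjm : j ≤ m := by omega
  rw [Ssum, Finset.mul_sum]
  have hjmn : j + (m - j) < n := by omega
  refine Finset.sum_nbij' (fun σ => σ * (cyc n j (m-j))⁻¹)
    (fun σ' => σ' * cyc n j (m-j)) ?_ ?_ ?_ ?_ ?_
  · -- maps fiber → Fm (m+1)
    intro σ hσ
    simp only [Finset.mem_filter, Fm, Finset.mem_univ, true_and] at hσ ⊢
    exact psi_mem hjm hm σ hσ.1 hσ.2
  · -- maps Fm (m+1) → fiber
    intro σ' hσ'
    simp only [Finset.mem_filter, Fm, Finset.mem_univ, true_and] at hσ' ⊢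
    exact phi_mem hjm hm σ' hσ'
  · intro σ _
    simp [mul_assoc]
  · intro σ' _
    simp [mul_assoc]
  · -- values
    intro σ hσ
    simp only [Finset.mem_filter, Fm, Finset.mem_univ, true_and] at hσ
    have hσ' := psi_mem hjm hm σ hσ.1 hσ.2
    have hback : (σ * (cyc n j (m-j))⁻¹) * cyc n j (m-j) = σ := by
      simp [mul_assoc]
    have hrel := invp_cyc (n := n) (m - j) (σ * (cyc n j (m-j))⁻¹) j hjmn ?_
    · rw [hback] at hrel
      rw [show m + invp n σ = j + invp n (σ * (cyc n j (m-j))⁻¹) by omega]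
      rw [pow_add]
    · intro x hx1 hx2
      exact hσ' ⟨j, by omega⟩ x (by rw [Fin.lt_def]; exact hx1) (by omega)

lemma Ssum_formula (q : K) (hq : q ≠ 0) {m : ℕ} (hmn : m ≤ n) :
    Ssum q n m = q ^ (m.choose 2) * ∏ i ∈ Finset.Ico m n, (∑ t ∈ Finset.range (i+1), q^t) := by
  classical
  obtain ⟨d, hd⟩ : ∃ d, m + d = n := ⟨n - m, by omega⟩
  induction d generalizing m with
  | zero =>
    have hmn' : m = n := by omega
    subst hmn'
    rw [Ssum, Fm_n_eq]
    simp [invp_rev]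
  | succ d ih =>
    have hm : m < n := by omega
    have hstep := Ssum_step q (n := n) hm
    have hih := ih (m := m+1) (by omega) (by omega)
    have hprod : ∏ i ∈ Finset.Ico m n, (∑ t ∈ Finset.range (i+1), q^t)
        = (∑ t ∈ Finset.range (m+1), q^t) *
          ∏ i ∈ Finset.Ico (m+1) n, (∑ t ∈ Finset.range (i+1), q^t) :=
      Finset.prod_eq_prod_Ico_succ_bot hm _
    have hch : (m+1).choose 2 = m.choose 2 + m := by
      rw [Nat.choose_succ_succ]
      simp [Nat.choose_one_right]
      omega
    apply mul_left_cancel₀ (pow_ne_zero m hq)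
    rw [hstep, hih, hprod, hch, pow_add]
    ring

end AuxSt19f
section AuxSt19g

variable {n : ℕ}

lemma filter_isDesarAt_eq (k : ℕ) (hk : 1 ≤ k) (hp : 2*k-1 < n) (h2k : 2*k < n) :
    Finset.univ.filter (fun σ : Equiv.Perm (Fin n) => IsDesarAt n k (pword n σ))
      = (Fm n (2*k)).filter
          (fun σ => σ ⟨2*k-1, hp⟩ < σ ⟨2*k, h2k⟩) := by
  ext σ
  simp only [Finset.mem_filter, Finset.mem_univ, true_and, Fm]
  unfold IsDesarAt
  constructor
  · rintro ⟨-, -, hdec, hasc⟩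
    have hd : decOn n (2*k) σ := by
      refine decOn_of_consec (by omega) σ ?_
      intro i hi
      exact (pword_lt_pword_iff σ (a := i) (b := i+1) (by omega) (by omega)).mp (hdec i hi)
    refine ⟨hd, ?_⟩
    rcases hasc with h | h
    · omega
    · exact (pword_lt_pword_iff σ (a := 2*k) (b := 2*k-1) h2k (by omega)).mp h
  · rintro ⟨hd, hasc⟩
    refine ⟨hk, by omega, ?_, Or.inr ?_⟩
    · intro i hi
      refine (pword_lt_pword_iff σ (a := i) (b := i+1) (by omega) (by omega)).mpr ?_
      exact hd ⟨i, by omega⟩ ⟨i+1, by omega⟩ (show i < i + 1 by omega) (show i + 1 < 2*k from hi)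
    · exact (pword_lt_pword_iff σ (a := 2*k) (b := 2*k-1) h2k (by omega)).mpr hasc

lemma filter_isDesarAt_eq_top (k : ℕ) (hk : 1 ≤ k) (h2k : 2*k = n) :
    Finset.univ.filter (fun σ : Equiv.Perm (Fin n) => IsDesarAt n k (pword n σ))
      = Fm n n := by
  ext σ
  simp only [Finset.mem_filter, Finset.mem_univ, true_and, Fm]
  unfold IsDesarAt
  constructor
  · rintro ⟨-, -, hdec, -⟩
    refine decOn_of_consec (le_refl n) σ ?_
    intro i hi
    exact (pword_lt_pword_iff σ (a := i) (b := i+1) (by omega) (by omega)).mp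
      (hdec i (by omega))
  · intro hd
    refine ⟨hk, by omega, ?_, Or.inl h2k⟩
    intro i hi
    refine (pword_lt_pword_iff σ (a := i) (b := i+1) (by omega) (by omega)).mpr ?_
    exact hd ⟨i, by omega⟩ ⟨i+1, by omega⟩ (show i < i + 1 by omega) (show i + 1 < n by omega)

lemma isDesarAt_unique {x : ℕ → ℤ} {k k' : ℕ} (h : IsDesarAt n k x)
    (h' : IsDesarAt n k' x) : k = k' := by
  have main : ∀ a b : ℕ, a < b → IsDesarAt n a x → IsDesarAt n b x → False := by
    intro a b hab ha hb
    obtain ⟨ha1, ha2, hadec, haasc⟩ := ha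
    obtain ⟨hb1, hb2, hbdec, hbasc⟩ := hb
    rcases haasc with h2 | h2
    · omega
    · have := hbdec (2*a - 1) (by omega)
      rw [show 2*a - 1 + 1 = 2*a by omega] at this
      exact absurd h2 (lt_asymm this)
  rcases Nat.lt_trichotomy k k' with h2 | h2 | h2
  · exact (main k k' h2 h h').elim
  · exact h2
  · exact (main k' k h2 h' h).elim

lemma fm_not_asc (k : ℕ) (hk : 1 ≤ k) (hp : 2*k-1 < n) (h2k : 2*k < n) :
    (Fm n (2*k)).filter
      (fun σ : Equiv.Perm (Fin n) => ¬ (σ ⟨2*k-1, hp⟩ < σ ⟨2*k, h2k⟩))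
      = Fm n (2*k+1) := by
  ext σ
  simp only [Finset.mem_filter, Finset.mem_univ, true_and, Fm]
  rw [decOn_succ (m := 2*k) h2k (by omega) σ]
  constructor
  · rintro ⟨hd, hasc⟩
    refine ⟨hd, ?_⟩
    have hle : σ ⟨2*k, h2k⟩ ≤ σ ⟨2*k-1, hp⟩ := le_of_not_gt hasc
    have hne : σ ⟨2*k, h2k⟩ ≠ σ ⟨2*k-1, hp⟩ := by
      intro hh
      have h2 := congrArg Fin.val (σ.injective hh)
      simp only [Fin.val_mk] at h2
      omega
    exact lt_of_le_of_ne hle hne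
  · rintro ⟨hd, hlt⟩
    exact ⟨hd, fun hh => absurd hlt (lt_asymm hh)⟩

end AuxSt19g
lemma st19_part2 {K : Type*} [Field K] (q : K) (h1 : (1 : K) - q ≠ 0) (n : ℕ)
    (k : ℕ) (hk2 : 2 ≤ 2 * k) (hkn : 2 * k ≤ n - 1) (hn : 1 ≤ n) :
    (∑ σ ∈ Finset.univ.filter (fun σ : Equiv.Perm (Fin n) => IsDesarAt n k (pword n σ)),
        q ^ invStat n (pword n σ))
      = ((1 - q ^ (2 * k)) / (1 - q))
          * ((∏ i ∈ Finset.range (n - 2 * k - 1), (1 - q ^ (2 * k + 2 + i)))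
              / (1 - q) ^ (n - 2 * k - 1))
          * q ^ Nat.choose (2 * k) 2 := by
  classical
  have hk : 1 ≤ k := by omega
  have h2k : 2*k < n := by omega
  have hp : 2*k-1 < n := by omega
  have geo : ∀ N : ℕ, (1 - q) * (∑ t ∈ Finset.range N, q^t) = 1 - q^N := by
    intro N
    have h := geom_sum_mul q N
    linear_combination -h
  set G : K := ∑ t ∈ Finset.range (2*k), q^t with hG
  set P : K := ∏ i ∈ Finset.Ico (2*k+1) n, (∑ t ∈ Finset.range (i+1), q^t) with hP
  have hRHS : ((1 - q ^ (2 * k)) / (1 - q))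
          * ((∏ i ∈ Finset.range (n - 2 * k - 1), (1 - q ^ (2 * k + 2 + i)))
              / (1 - q) ^ (n - 2 * k - 1))
          * q ^ Nat.choose (2 * k) 2 = G * P * q ^ Nat.choose (2*k) 2 := by
    have e1 : (1 - q ^ (2*k)) / (1 - q) = G := by
      rw [← geo (2*k), mul_div_cancel_left₀ _ h1]
    have e2 : (∏ i ∈ Finset.range (n - 2*k - 1), (1 - q ^ (2*k+2+i)))
        = (1-q)^(n-2*k-1) * P := by
      have hterm : ∀ i ∈ Finset.range (n-2*k-1), (1 - q^(2*k+2+i))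
          = (1-q) * (∑ t ∈ Finset.range ((2*k+1+i)+1), q^t) := by
        intro i _
        rw [geo]
        congr 2
        omega
      rw [Finset.prod_congr rfl hterm, Finset.prod_mul_distrib, Finset.prod_const,
        Finset.card_range]
      congr 1
      rw [hP, Finset.prod_Ico_eq_prod_range, show n - (2*k+1) = n - 2*k - 1 from by omega]
    rw [e1, e2]
    field_simp
  rw [hRHS, filter_isDesarAt_eq k hk hp h2k]
  refine Eq.trans (Finset.sum_congr rfl (fun σ _ => by rw [invStat_pword])) ?_
  by_cases hq : q = 0
  · subst hq
    rw [zero_pow (Nat.choose_pos hk2).ne', mul_zero]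
    apply Finset.sum_eq_zero
    intro σ hσ
    simp only [Finset.mem_filter, Fm, Finset.mem_univ, true_and] at hσ
    have h1n : 1 < n := by omega
    have hdesc : σ ⟨1, h1n⟩ < σ ⟨0, by omega⟩ :=
      hσ.1 ⟨0, by omega⟩ ⟨1, h1n⟩ (show (0:ℕ) < 1 by omega) (show 1 < 2*k by omega)
    have hmem : ((⟨0, by omega⟩ : Fin n), (⟨1, h1n⟩ : Fin n)) ∈
        (Finset.univ : Finset (Fin n × Fin n)).filter
          (fun p => p.1 < p.2 ∧ σ p.2 < σ p.1) := by
      simp only [Finset.mem_filter, Finset.mem_univ, true_and]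
      exact ⟨show (0:ℕ) < 1 by omega, hdesc⟩
    have hpos : 0 < invp n σ := Finset.card_pos.mpr ⟨_, hmem⟩
    rw [zero_pow (by omega)]
  · have hsplit := Finset.sum_filter_add_sum_filter_not (Fm n (2*k))
      (fun σ : Equiv.Perm (Fin n) => σ ⟨2*k-1, hp⟩ < σ ⟨2*k, h2k⟩)
      (fun σ => q ^ invp n σ)
    have hnot : (∑ σ ∈ (Fm n (2*k)).filter
        (fun σ : Equiv.Perm (Fin n) => ¬ (σ ⟨2*k-1, hp⟩ < σ ⟨2*k, h2k⟩)), q ^ invp n σ)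
        = Ssum q n (2*k+1) := by
      rw [fm_not_asc k hk hp h2k]
      rfl
    rw [hnot] at hsplit
    have hfm : (∑ σ ∈ Fm n (2*k), q ^ invp n σ) = Ssum q n (2*k) := rfl
    rw [hfm] at hsplit
    have hs2k := Ssum_formula q hq (show 2*k ≤ n by omega)
    have hs2k1 := Ssum_formula q hq (show 2*k+1 ≤ n by omega)
    have hprodsplit : (∏ i ∈ Finset.Ico (2*k) n, (∑ t ∈ Finset.range (i+1), q^t))
        = (∑ t ∈ Finset.range (2*k+1), q^t) * P :=
      Finset.prod_eq_prod_Ico_succ_bot h2k _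
    have hE : (∑ t ∈ Finset.range (2*k+1), q^t) = G + q^(2*k) := by
      rw [Finset.sum_range_succ]
    have hch : (2*k+1).choose 2 = (2*k).choose 2 + 2*k := by
      rw [Nat.choose_succ_succ]
      simp [Nat.choose_one_right]
      omega
    rw [hs2k, hs2k1, hprodsplit, hE, hch, pow_add] at hsplit
    linear_combination hsplit
lemma st19_part1 {K : Type*} [Field K] (q : K) (h1 : (1 : K) - q ≠ 0) (n : ℕ) (hn : 1 ≤ n) :
    (∑ σ ∈ Finset.univ.filter (fun σ : Equiv.Perm (Fin n) => IsDesar n (pword n σ)),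
        q ^ invStat n (pword n σ))
      = (∑ k ∈ (Finset.range (n + 1)).filter (fun k => 2 ≤ 2 * k ∧ 2 * k ≤ n - 1),
          ((1 - q ^ (2 * k)) / (1 - q))
            * ((∏ i ∈ Finset.range (n - 2 * k - 1), (1 - q ^ (2 * k + 2 + i)))
                / (1 - q) ^ (n - 2 * k - 1))
            * q ^ Nat.choose (2 * k) 2)
        + q ^ Nat.choose n 2 * (if Even n then 1 else 0) := by
  classical
  set f : Equiv.Perm (Fin n) → K := fun σ => q ^ invStat n (pword n σ) with hf
  set gk : Equiv.Perm (Fin n) → ℕ := fun σ =>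
    if h : ∃ k, IsDesarAt n k (pword n σ) then h.choose else 0 with hgk
  have hex : ∀ σ : Equiv.Perm (Fin n), IsDesar n (pword n σ) →
      ∃ k, IsDesarAt n k (pword n σ) := by
    intro σ h
    rcases h with h | h
    · omega
    · exact h
  have hmaps : ∀ σ ∈ Finset.univ.filter
      (fun σ : Equiv.Perm (Fin n) => IsDesar n (pword n σ)),
      gk σ ∈ Finset.range (n+1) := by
    intro σ hσ
    simp only [Finset.mem_filter, Finset.mem_univ, true_and] at hσ
    obtain hex2 := hex σ hσ
    rw [hgk]
    simp only
    rw [dif_pos hex2]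
    obtain ⟨h1', h2', -, -⟩ := hex2.choose_spec
    rw [Finset.mem_range]
    omega
  rw [← Finset.sum_fiberwise_of_maps_to hmaps f]
  have hfiber : ∀ k, (Finset.univ.filter
      (fun σ : Equiv.Perm (Fin n) => IsDesar n (pword n σ))).filter
      (fun σ => gk σ = k)
      = Finset.univ.filter (fun σ : Equiv.Perm (Fin n) => IsDesarAt n k (pword n σ)) := by
    intro k
    ext σ
    simp only [Finset.mem_filter, Finset.mem_univ, true_and]
    constructor
    · rintro ⟨hd, hg⟩
      obtain hex2 := hex σ hd
      rw [hgk] at hg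
      simp only at hg
      rw [dif_pos hex2] at hg
      exact hg ▸ hex2.choose_spec
    · intro hk
      have hex2 : ∃ k', IsDesarAt n k' (pword n σ) := ⟨k, hk⟩
      refine ⟨Or.inr hex2, ?_⟩
      rw [hgk]
      simp only
      rw [dif_pos hex2]
      exact isDesarAt_unique (n := n) hex2.choose_spec hk
  have hstep : (∑ k ∈ Finset.range (n+1), ∑ σ ∈ (Finset.univ.filter
      (fun σ : Equiv.Perm (Fin n) => IsDesar n (pword n σ))).filter
      (fun σ => gk σ = k), f σ)
      = ∑ k ∈ Finset.range (n+1), ∑ σ ∈ Finset.univ.filter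
        (fun σ : Equiv.Perm (Fin n) => IsDesarAt n k (pword n σ)), f σ :=
    Finset.sum_congr rfl (fun k _ => by rw [hfiber k])
  rw [hstep]
  rw [← Finset.sum_filter_add_sum_filter_not (Finset.range (n+1))
    (fun k => 2 ≤ 2*k ∧ 2*k ≤ n-1)
    (fun k => ∑ σ ∈ Finset.univ.filter
      (fun σ : Equiv.Perm (Fin n) => IsDesarAt n k (pword n σ)), f σ)]
  congr 1
  · apply Finset.sum_congr rfl
    intro k hk
    rw [Finset.mem_filter, Finset.mem_range] at hk
    exact st19_part2 q h1 n k hk.2.1 hk.2.2 hn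
  · by_cases hev : Even n
    · have hr' := hev
      obtain ⟨r, hr⟩ := hr'
      have hk0 : 2 * (n/2) = n := by omega
      have hk01 : 1 ≤ n/2 := by omega
      rw [if_pos hev, mul_one]
      rw [Finset.sum_eq_single_of_mem (n/2) ?_ ?_]
      · rw [filter_isDesarAt_eq_top (n/2) hk01 hk0, Fm_n_eq, Finset.sum_singleton, hf]
        simp only
        rw [invStat_pword, invp_rev]
      · rw [Finset.mem_filter, Finset.mem_range]
        constructor
        · omega
        · omega
      · intro k hk hkne
        rw [Finset.mem_filter, Finset.mem_range] at hk
        apply Finset.sum_eq_zero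
        intro σ hσ
        rw [Finset.mem_filter] at hσ
        obtain ⟨-, hk1, hk2n, -, -⟩ := hσ
        exfalso
        apply hkne
        omega
    · rw [if_neg hev, mul_zero]
      apply Finset.sum_eq_zero
      intro k hk
      rw [Finset.mem_filter, Finset.mem_range] at hk
      apply Finset.sum_eq_zero
      intro σ hσ
      rw [Finset.mem_filter] at hσ
      obtain ⟨-, hk1, hk2n, -, -⟩ := hσ
      exfalso
      exact hev ⟨k, by omega⟩
theorem stmt19 (K : Type*) [Field K] (q : K) (h1 : (1 : K) - q ≠ 0) (n : ℕ) (hn : 1 ≤ n) :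
    ((∑ σ ∈ Finset.univ.filter (fun σ : Equiv.Perm (Fin n) => IsDesar n (pword n σ)),
        q ^ invStat n (pword n σ))
      = (∑ k ∈ (Finset.range (n + 1)).filter (fun k => 2 ≤ 2 * k ∧ 2 * k ≤ n - 1),
          ((1 - q ^ (2 * k)) / (1 - q))
            * ((∏ i ∈ Finset.range (n - 2 * k - 1), (1 - q ^ (2 * k + 2 + i)))
                / (1 - q) ^ (n - 2 * k - 1))
            * q ^ Nat.choose (2 * k) 2)
        + q ^ Nat.choose n 2 * (if Even n then 1 else 0)) ∧
    (∀ k : ℕ, 2 ≤ 2 * k → 2 * k ≤ n - 1 →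
      (∑ σ ∈ Finset.univ.filter (fun σ : Equiv.Perm (Fin n) => IsDesarAt n k (pword n σ)),
          q ^ invStat n (pword n σ))
        = ((1 - q ^ (2 * k)) / (1 - q))
            * ((∏ i ∈ Finset.range (n - 2 * k - 1), (1 - q ^ (2 * k + 2 + i)))
                / (1 - q) ^ (n - 2 * k - 1))
            * q ^ Nat.choose (2 * k) 2) :=
  ⟨st19_part1 q h1 n hn, fun k hk2 hkn => st19_part2 q h1 n k hk2 hkn hn⟩
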